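/- For every integer l ≥ 6, 8/(π^{5/2}·(l+1)²) ≤ 2/(l·(l + √(l²-1))); consequently 2·∫_{√(2 log(π(l/2+1/2))/(π(l²-1)))}^∞ e^{-π(l²-1)x²} dx ≤ 1/√(l²-1) - 1/l. -/

import Mathlib

open Real MeasureTheory

private lemma exp_int_Ioi (k a : ℝ) (hk : 0 < k) :
    ∫ x in Set.Ioi a, Real.exp (-(k * x)) = Real.exp (-(k * a)) / k := by
  have hderiv : ∀ x ∈ Set.Ici a,
      HasDerivAt (fun y : ℝ => -Real.exp (-(k * y)) / k) (Real.exp (-(k * x))) x := by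
    intro x _
    have h1 : HasDerivAt (fun y : ℝ => -(k * y)) (-k) x := by
      simpa using ((hasDerivAt_id x).const_mul k).fun_neg
    have h2 : HasDerivAt (fun y : ℝ => Real.exp (-(k * y)))
        (Real.exp (-(k * x)) * (-k)) x := (Real.hasDerivAt_exp _).comp x h1
    have h3 := (h2.fun_neg).div_const k
    refine h3.congr_deriv ?_
    field_simp
  have htend : Filter.Tendsto (fun y : ℝ => -Real.exp (-(k * y)) / k)
      Filter.atTop (nhds 0) := by
    have h1 : Filter.Tendsto (fun y : ℝ => -(k * y)) Filter.atTop Filter.atBot := by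
      apply Filter.tendsto_neg_atBot_iff.mpr
      exact Filter.Tendsto.const_mul_atTop hk Filter.tendsto_id
    have h2 := Real.tendsto_exp_atBot.comp h1
    have h3 := (h2.neg).div_const k
    simpa using h3
  have hint : IntegrableOn (fun x : ℝ => Real.exp (-(k * x))) (Set.Ioi a) := by
    simpa [neg_mul] using exp_neg_integrableOn_Ioi a hk
  have := integral_Ioi_of_hasDerivAt_of_tendsto' hderiv hint htend
  rw [this]
  ring

set_option maxHeartbeats 1000000 in
theorem stmt7 (l : ℕ) (hl : 6 ≤ l) :
    8 / (π ^ ((5 : ℝ) / 2) * ((l : ℝ) + 1) ^ 2) ≤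
      2 / ((l : ℝ) * ((l : ℝ) + Real.sqrt ((l : ℝ) ^ 2 - 1))) ∧
    2 * ∫ x in Set.Ioi
        (Real.sqrt (2 * Real.log (π * ((l : ℝ) / 2 + 1 / 2)) / (π * ((l : ℝ) ^ 2 - 1)))),
        Real.exp (-π * ((l : ℝ) ^ 2 - 1) * x ^ 2) ≤
      1 / Real.sqrt ((l : ℝ) ^ 2 - 1) - 1 / (l : ℝ) := by
  have hL : (6 : ℝ) ≤ (l : ℝ) := by exact_mod_cast hl
  set L : ℝ := (l : ℝ) with hLdef
  have hL0 : 0 < L := by linarith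
  set c : ℝ := L ^ 2 - 1 with hcdef
  have hc35 : (35 : ℝ) ≤ c := by nlinarith
  have hc0 : 0 < c := by linarith
  set s : ℝ := Real.sqrt c with hsdef
  have hs0 : 0 < s := Real.sqrt_pos.2 hc0
  have hs2 : s ^ 2 = c := Real.sq_sqrt hc0.le
  have hsL : s ≤ L := by
    rw [hsdef, show L = Real.sqrt (L ^ 2) from (Real.sqrt_sq hL0.le).symm]
    exact Real.sqrt_le_sqrt (by nlinarith)
  have hπ3 : (3 : ℝ) ≤ π := Real.pi_gt_three.le
  have hπ0 : (0 : ℝ) < π := Real.pi_pos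
  constructor
  · -- part 1
    have hpow : (8 : ℝ) ≤ π ^ ((5 : ℝ) / 2) := by
      have h1 : π ^ ((2 : ℕ) : ℝ) ≤ π ^ ((5 : ℝ) / 2) :=
        Real.rpow_le_rpow_of_exponent_le (by linarith) (by norm_num)
      rw [Real.rpow_natCast] at h1
      nlinarith
    rw [div_le_div_iff₀ (by positivity) (by positivity)]
    nlinarith [mul_le_mul_of_nonneg_left hsL (by linarith : (0:ℝ) ≤ 8 * L),
      mul_le_mul_of_nonneg_right hpow (sq_nonneg (L + 1)), sq_nonneg (L + 1)]
  · -- part 2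
    set M : ℝ := π * (L / 2 + 1 / 2) with hMdef
    have hM10 : (10 : ℝ) ≤ M := by rw [hMdef]; nlinarith
    have hM0 : 0 < M := by linarith
    have hlogM : 1 ≤ Real.log M := by
      rw [Real.le_log_iff_exp_le hM0]
      have := Real.exp_one_lt_d9
      linarith
    have hlogM0 : 0 < Real.log M := by linarith
    set a : ℝ := Real.sqrt (2 * Real.log M / (π * c)) with hadef
    have ha0 : 0 < a := Real.sqrt_pos.2 (by positivity)
    have ha2 : a ^ 2 = 2 * Real.log M / (π * c) := Real.sq_sqrt (by positivity)
    have hEa : π * c * a ^ 2 = 2 * Real.log M := by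
      rw [ha2]; field_simp
    have hexpa : Real.exp (-(π * c * a ^ 2)) = 1 / M ^ 2 := by
      have h2 : Real.exp (2 * Real.log M) = M ^ 2 := by
        rw [two_mul, Real.exp_add, Real.exp_log hM0]; ring
      rw [hEa, Real.exp_neg, h2, one_div]
    set k : ℝ := 2 * π * c * a with hkdef
    have hk0 : 0 < k := by positivity
    -- integrand rewrite
    have hfun : (fun x : ℝ => Real.exp (-π * c * x ^ 2)) =
        fun x : ℝ => Real.exp (-(π * c) * x ^ 2) := by
      funext x; congr 1; ring
    have hint1 : IntegrableOn (fun x : ℝ => Real.exp (-π * c * x ^ 2)) (Set.Ioi a) := by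
      rw [hfun]
      exact (integrable_exp_neg_mul_sq (by positivity : (0:ℝ) < π * c)).integrableOn
    have hint2 : IntegrableOn
        (fun x : ℝ => Real.exp (π * c * a ^ 2) * Real.exp (-(k * x))) (Set.Ioi a) := by
      have := exp_neg_integrableOn_Ioi a hk0
      have h' : IntegrableOn (fun x : ℝ => Real.exp (-(k * x))) (Set.Ioi a) := by
        simpa [neg_mul] using this
      exact h'.const_mul _
    have hmono : ∀ x : ℝ, Real.exp (-π * c * x ^ 2) ≤
        Real.exp (π * c * a ^ 2) * Real.exp (-(k * x)) := by
      intro x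
      rw [← Real.exp_add]
      apply Real.exp_le_exp.2
      rw [hkdef]
      nlinarith [sq_nonneg (x - a), mul_pos hπ0 hc0]
    have hIle : (∫ x in Set.Ioi a, Real.exp (-π * c * x ^ 2)) ≤
        Real.exp (-(π * c * a ^ 2)) / k := by
      calc (∫ x in Set.Ioi a, Real.exp (-π * c * x ^ 2))
          ≤ ∫ x in Set.Ioi a, Real.exp (π * c * a ^ 2) * Real.exp (-(k * x)) :=
            integral_mono hint1 hint2 (fun x => hmono x)
        _ = Real.exp (π * c * a ^ 2) * (Real.exp (-(k * a)) / k) := by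
            rw [MeasureTheory.integral_const_mul, exp_int_Ioi k a hk0]
        _ = Real.exp (-(π * c * a ^ 2)) / k := by
            rw [← mul_div_assoc, ← Real.exp_add]
            congr 2
            rw [hkdef]
            ring
    -- πca = sqrt(2πc log M)
    have hpca : π * c * a = Real.sqrt (2 * π * c * Real.log M) := by
      rw [hadef, show π * c = Real.sqrt ((π * c) ^ 2) from
        (Real.sqrt_sq (by positivity)).symm, ← Real.sqrt_mul (by positivity)]
      congr 1
      field_simp
      rw [← mul_pow, Real.sqrt_sq (by positivity)]
    have hpca2 : 2 * s ≤ π * c * a := by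
      have h3 : (3 : ℝ) ≤ π * Real.log M := by nlinarith
      rw [hpca, show (2:ℝ) * s = Real.sqrt ((2 * s) ^ 2) from
        (Real.sqrt_sq (by positivity)).symm]
      apply Real.sqrt_le_sqrt
      nlinarith [hs2, mul_le_mul_of_nonneg_left h3 hc0.le]
    have hLs1 : (L - s) * (L + s) = 1 := by nlinarith
    have hfinal : 1 / M ^ 2 / (π * c * a) ≤ 1 / s - 1 / L := by
      have h1 : 1 / s - 1 / L = 1 / (L * s * (L + s)) := by
        rw [div_sub_div _ _ hs0.ne' hL0.ne', one_mul, mul_one,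
          div_eq_div_iff (by positivity) (by positivity)]
        linear_combination (L * s) * hLs1
      rw [h1, div_div, div_le_div_iff₀ (by positivity) (by positivity), one_mul, one_mul]
      have hM2 : 3 * (L + 1) / 2 ≤ M := by rw [hMdef]; nlinarith
      have h2M : L * (L + s) ≤ 2 * M ^ 2 := by
        nlinarith [mul_self_le_mul_self (by positivity : (0:ℝ) ≤ 3 * (L + 1) / 2) hM2,
          mul_le_mul_of_nonneg_left hsL hL0.le]
      nlinarith [mul_le_mul_of_nonneg_left h2M hs0.le,
        mul_le_mul_of_nonneg_left hpca2 (sq_nonneg M), sq_nonneg M]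
    calc 2 * ∫ x in Set.Ioi a, Real.exp (-π * c * x ^ 2)
        ≤ 2 * (Real.exp (-(π * c * a ^ 2)) / k) := by linarith
      _ = 1 / M ^ 2 / (π * c * a) := by
          rw [hexpa, hkdef]; field_simp
      _ ≤ 1 / s - 1 / L := hfinal
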